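/- Let (φ_t) be a non-elliptic semigroup in the unit disc 𝔻 with Denjoy-Wolff point 1, and write C(φ_t(0)) = ρ_t e^{iθ_t} with ρ_t > 0, θ_t ∈ (−π/2, π/2), where C is the Cayley transform. Then there exists K > 0 such that for all t ≥ 1, |v^o(t) + (1/2) log ω(1, Θ_t, ℍ)| ≤ K, where Θ_t := {iy : y ∈ ℝ, |y| ≥ ρ_t} and v^o is the orthogonal speed of (φ_t). -/

import Mathlib

open Complex Filter Topology Set MeasureTheory

noncomputable section

/-- The unit disc in the complex plane. -/
def unitDisc : Set ℂ := {z : ℂ | norm z < 1}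

/-- The inverse hyperbolic tangent: `arctanh x = (1/2)·log((1+x)/(1−x))`. -/
def arctanh (x : ℝ) : ℝ := (1 / 2) * Real.log ((1 + x) / (1 - x))

/-- The hyperbolic distance on the unit disc:
`k_𝔻(z,w) = arctanh |(z−w)/(1−conj(z)·w)|`. -/
def kD (z w : ℂ) : ℝ :=
  arctanh (norm ((z - w) / (1 - (starRingEnd ℂ) z * w)))

/-- `φ` is a continuous one-parameter semigroup of holomorphic self-maps of the unit disc. -/
structure IsDiscSemigroup (φ : ℝ → ℂ → ℂ) : Prop where
  mapsTo : ∀ t : ℝ, 0 ≤ t → Set.MapsTo (φ t) unitDisc unitDisc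
  holo : ∀ t : ℝ, 0 ≤ t → DifferentiableOn ℂ (φ t) unitDisc
  id0 : ∀ z ∈ unitDisc, φ 0 z = z
  comp : ∀ s t : ℝ, 0 ≤ s → 0 ≤ t → ∀ z ∈ unitDisc, φ (t + s) z = φ t (φ s z)
  cont : ContinuousOn (fun p : ℝ × ℂ => φ p.1 p.2) (Set.Ici 0 ×ˢ unitDisc)

/-- A semigroup in the disc is non-elliptic if it has no fixed point in the disc
for positive times. -/
structure IsNonElliptic (φ : ℝ → ℂ → ℂ) extends IsDiscSemigroup φ : Prop where
  noFixedPoint : ∀ t : ℝ, 0 < t → ∀ z ∈ unitDisc, φ t z ≠ z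

/-- `τ` is the Denjoy-Wolff point of the semigroup `φ`: a boundary point to which
all orbits converge. -/
def IsDenjoyWolff (φ : ℝ → ℂ → ℂ) (τ : ℂ) : Prop :=
  norm τ = 1 ∧ ∀ z ∈ unitDisc, Tendsto (fun t => φ t z) atTop (𝓝 τ)

/-- `h` is a Koenigs function of the semigroup `φ`: univalent on the disc with
`h(φ_t(z)) = h(z) + it`. -/
def IsKoenigs (φ : ℝ → ℂ → ℂ) (h : ℂ → ℂ) : Prop :=
  DifferentiableOn ℂ h unitDisc ∧ Set.InjOn h unitDisc ∧
    ∀ t : ℝ, 0 ≤ t → ∀ z ∈ unitDisc, h (φ t z) = h z + Complex.I * t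

/-- `p` is the hyperbolic orthogonal projection onto the geodesic `(−1,1)·τ`:
for every `z` in the disc, `p z` lies on the geodesic and minimizes the hyperbolic
distance from `z` to the geodesic. -/
def IsOrthProjection (τ : ℂ) (p : ℂ → ℂ) : Prop :=
  ∀ z ∈ unitDisc,
    (∃ r : ℝ, r ∈ Set.Ioo (-1 : ℝ) 1 ∧ p z = (r : ℂ) * τ) ∧
    ∀ r : ℝ, r ∈ Set.Ioo (-1 : ℝ) 1 → kD z (p z) ≤ kD z ((r : ℂ) * τ)

/-- The total speed `v(t) = k_𝔻(0, φ_t(0))` of a semigroup. -/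
def totalSpeed (φ : ℝ → ℂ → ℂ) (t : ℝ) : ℝ := kD 0 (φ t 0)

/-- The orthogonal speed `v^o(t) = k_𝔻(0, π(φ_t(0)))` of a semigroup, relative to the
orthogonal projection `p` onto the geodesic `(−1,1)·τ`. -/
def orthSpeed (φ : ℝ → ℂ → ℂ) (p : ℂ → ℂ) (t : ℝ) : ℝ := kD 0 (p (φ t 0))

/-- `δ⁺(t)`: the truncated distance from `z₀ + it` to the part of the complement of `Ω`
lying to the right of the vertical line through `z₀`. -/
def deltaPlus (Ω : Set ℂ) (z₀ : ℂ) (t : ℝ) : ℝ :=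
  min t (sInf {d : ℝ | ∃ w : ℂ, w ∉ Ω ∧ z₀.re ≤ w.re ∧ d = norm (w - (z₀ + Complex.I * t))})

/-- `δ⁻(t)`: the truncated distance from `z₀ + it` to the part of the complement of `Ω`
lying to the left of the vertical line through `z₀`. -/
def deltaMinus (Ω : Set ℂ) (z₀ : ℂ) (t : ℝ) : ℝ :=
  min t (sInf {d : ℝ | ∃ w : ℂ, w ∉ Ω ∧ w.re ≤ z₀.re ∧ d = norm (w - (z₀ + Complex.I * t))})

/-- `Ω` is quasi-symmetric with respect to vertical axes. -/
def QuasiSymmetric (Ω : Set ℂ) : Prop :=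
  ∃ z₀ ∈ Ω, ∃ K : ℝ, 0 < K ∧ ∀ t : ℝ, 0 ≤ t →
    K⁻¹ * deltaMinus Ω z₀ t ≤ deltaPlus Ω z₀ t ∧ deltaPlus Ω z₀ t ≤ K * deltaMinus Ω z₀ t

/-- `Ω` is starlike with respect to `w₀`: every segment from `w₀` to a point of `Ω`
is contained in `Ω`. -/
def StarlikeWrt (Ω : Set ℂ) (w₀ : ℂ) : Prop :=
  ∀ w ∈ Ω, ∀ s : ℝ, s ∈ Set.Icc (0 : ℝ) 1 → (1 - (s : ℂ)) * w₀ + (s : ℂ) * w ∈ Ω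

/-- The orbit of `0` converges non-tangentially to `τ`:
`limsup_{t→+∞} |τ − φ_t(0)|/(1 − |φ_t(0)|) < +∞`. -/
def ConvergesNonTangentially (φ : ℝ → ℂ → ℂ) (τ : ℂ) : Prop :=
  Filter.limsup (fun t : ℝ =>
    ((norm (τ - φ t 0) / (1 - norm (φ t 0)) : ℝ) : EReal)) atTop < ⊤

/-- `f` is eventually non-decreasing. -/
def EventuallyNondecreasing (f : ℝ → ℝ) : Prop :=
  ∃ T : ℝ, ∀ s t : ℝ, T ≤ s → s ≤ t → f s ≤ f t

/-- The Cayley transform from the unit disc to the right half-plane. -/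
def cayley (z : ℂ) : ℂ := (1 + z) / (1 - z)

/-- The inverse Cayley transform, from the right half-plane to the unit disc. -/
def cayleyInv (w : ℂ) : ℂ := (w - 1) / (w + 1)

/-- `Θ_ρ := {iy : y ∈ ℝ, |y| ≥ ρ}`, a subset of the imaginary axis. -/
def Theta (ρ : ℝ) : Set ℂ := {z : ℂ | ∃ y : ℝ, z = Complex.I * (y : ℂ) ∧ ρ ≤ |y|}

/-- `Γ*_t := {iy : |y| ≥ inf_{u ≥ t} ρ_u}`. -/
def GammaStar (ρ : ℝ → ℝ) (t : ℝ) : Set ℂ :=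
  {z : ℂ | ∃ y : ℝ, z = Complex.I * (y : ℂ) ∧ sInf {r : ℝ | ∃ u : ℝ, t ≤ u ∧ r = ρ u} ≤ |y|}

/-- The harmonic measure at `w` (a point of the right half-plane) of a Borel subset `E`
of the imaginary axis, with respect to the right half-plane:
`ω(w,E,ℍ) = (1/π) ∫_{{s : is ∈ E}} Re w/((Re w)² + (Im w − s)²) ds`. -/
def omegaH (w : ℂ) (E : Set ℂ) : ℝ :=
  (1 / Real.pi) *
    ∫ s in {s : ℝ | Complex.I * (s : ℂ) ∈ E}, w.re / (w.re ^ 2 + (w.im - s) ^ 2)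

/-- The Euclidean arclength of the closed arc of the unit circle containing `1`
with endpoints `a` and `conj a` (where `Im a > 0`), namely `2·arg a`. -/
def arcLength (a : ℂ) : ℝ := 2 * Complex.arg a

/-- The harmonic measure at `0` with respect to the unit disc of the closed arc of the
unit circle containing `1` with endpoints `a` and `conj a`: `ℓ(A)/(2π)`. -/
def omegaDiscZero (a : ℂ) : ℝ := arcLength a / (2 * Real.pi)

/-- `Π_α := {z ∈ ℂ : Im z > |Re z|^α}`. -/
def PiDom (α : ℝ) : Set ℂ := {z : ℂ | |z.re| ^ α < z.im}

/-- `W(θ) := {z ≠ 0 : arg z ∈ (π/2 − θ, π/2)}`. -/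
def Wsector (θ : ℝ) : Set ℂ :=
  {z : ℂ | z ≠ 0 ∧ Complex.arg z ∈ Set.Ioo (Real.pi / 2 - θ) (Real.pi / 2)}

/-- `Ξ(α,θ) := ({Re z ≤ 0} ∩ Π_α) ∪ W(θ)`. -/
def Xi (α θ : ℝ) : Set ℂ := ({z : ℂ | z.re ≤ 0} ∩ PiDom α) ∪ Wsector θ

lemma my_arctanh_lt {x y : ℝ} (hx : 0 ≤ x) (hxy : x < y) (hy : y < 1) :
    arctanh x < arctanh y := by
  unfold arctanh
  have h1x : 0 < 1 - x := by linarith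
  have h1y : 0 < 1 - y := by linarith
  have hlt : (1 + x) / (1 - x) < (1 + y) / (1 - y) := by
    rw [div_lt_div_iff₀ h1x h1y]; nlinarith
  have hp : 0 < (1 + x) / (1 - x) := by positivity
  linarith [Real.log_lt_log hp hlt]

lemma my_id1 (z : ℂ) (s : ℝ) : 4 * Complex.normSq (z - (s : ℂ)) =
    Complex.normSq (1 + z) * (1 - s) ^ 2 + Complex.normSq (1 - z) * (1 + s) ^ 2
      - 2 * (1 - s ^ 2) * (1 - Complex.normSq z) := by
  simp [Complex.normSq_apply]; ring

lemma my_id2 (z : ℂ) (s : ℝ) : 4 * Complex.normSq (1 - (starRingEnd ℂ) z * (s : ℂ)) =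
    Complex.normSq (1 + z) * (1 - s) ^ 2 + Complex.normSq (1 - z) * (1 + s) ^ 2
      + 2 * (1 - s ^ 2) * (1 - Complex.normSq z) := by
  simp [Complex.normSq_apply, Complex.mul_re, Complex.mul_im]; ring

lemma my_kd_zero (r : ℝ) : kD 0 ((r : ℂ)) = arctanh |r| := by
  simp [kD]

lemma my_arctan_le_self {x : ℝ} (hx : 0 ≤ x) : Real.arctan x ≤ x := by
  have hmono : Monotone (fun x : ℝ => x - Real.arctan x) := by
    apply monotone_of_deriv_nonneg
    · exact differentiable_id.sub Real.differentiable_arctan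
    · intro t
      have hd : HasDerivAt (fun x : ℝ => x - Real.arctan x) (1 - 1 / (1 + t ^ 2)) t :=
        (hasDerivAt_id t).sub (Real.hasDerivAt_arctan t)
      rw [hd.deriv]
      have h1 : (0:ℝ) < 1 + t ^ 2 := by positivity
      have h2 : 1 / (1 + t ^ 2) ≤ 1 := by
        rw [div_le_one h1]; nlinarith
      linarith
  have := hmono hx
  simp [Real.arctan_zero] at this
  linarith

lemma my_half_le_arctan {x : ℝ} (h0 : 0 ≤ x) (h1 : x ≤ 1) : x / 2 ≤ Real.arctan x := by
  have hmono : MonotoneOn (fun x : ℝ => Real.arctan x - x / 2) (Set.Icc 0 1) := by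
    apply monotoneOn_of_deriv_nonneg (convex_Icc 0 1)
    · exact (Real.continuous_arctan.sub (continuous_id.div_const 2)).continuousOn
    · exact (Real.differentiable_arctan.sub
        (differentiable_id.div_const 2)).differentiableOn
    · intro t ht
      rw [interior_Icc] at ht
      have hd : HasDerivAt (fun x : ℝ => Real.arctan x - x / 2) (1 / (1 + t ^ 2) - 1 / 2) t := by
        have := (Real.hasDerivAt_arctan t).sub ((hasDerivAt_id t).div_const 2)
        exact this
      rw [hd.deriv]
      have h1 : (0:ℝ) < 1 + t ^ 2 := by positivity
      have h2 : (1:ℝ) / 2 ≤ 1 / (1 + t ^ 2) := by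
        apply one_div_le_one_div_of_le h1
        nlinarith [ht.1, ht.2]
      linarith
  have := hmono (Set.mem_Icc.mpr ⟨le_refl 0, zero_le_one⟩) (Set.mem_Icc.mpr ⟨h0, h1⟩) h0
  simp [Real.arctan_zero] at this
  linarith

lemma my_omega_eq {ρ : ℝ} (hρ : 0 < ρ) :
    omegaH 1 (Theta ρ) = 2 / Real.pi * Real.arctan ρ⁻¹ := by
  have hset : {s : ℝ | Complex.I * (s : ℂ) ∈ Theta ρ} = Iic (-ρ) ∪ Ici ρ := by
    ext s
    simp only [Theta, mem_setOf_eq, mem_union, mem_Iic, mem_Ici]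
    constructor
    · rintro ⟨y, hy, h⟩
      have hsy : (s : ℂ) = (y : ℂ) := mul_left_cancel₀ Complex.I_ne_zero hy
      have hsy' : s = y := by exact_mod_cast hsy
      subst hsy'
      rcases le_abs.mp h with h' | h'
      · right; exact h'
      · left; linarith
    · rintro (h | h)
      · exact ⟨s, rfl, le_abs.mpr (Or.inr (by linarith))⟩
      · exact ⟨s, rfl, le_abs.mpr (Or.inl h)⟩
  unfold omegaH
  rw [hset]
  have hint : ∀ s : ℝ, (1:ℂ).re / ((1:ℂ).re ^ 2 + ((1:ℂ).im - s) ^ 2) = (1 + s ^ 2)⁻¹ := by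
    intro s
    simp [Complex.one_re, Complex.one_im]
  simp_rw [hint]
  rw [setIntegral_union (by simp [Set.Iic_disjoint_Ici]; linarith) measurableSet_Ici
      integrable_inv_one_add_sq.integrableOn integrable_inv_one_add_sq.integrableOn,
    MeasureTheory.integral_Ici_eq_integral_Ioi, integral_Ioi_inv_one_add_sq,
    integral_Iic_inv_one_add_sq, Real.arctan_neg, Real.arctan_inv_of_pos hρ]
  have hπ : Real.pi ≠ 0 := ne_of_gt Real.pi_pos
  field_simp
  ring

lemma my_one_add_ne (z : ℂ) (hz : z ∈ unitDisc) : (1 : ℂ) + z ≠ 0 := by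
  intro h
  have hz1 : z = -1 := by linear_combination h - (1:ℂ)
  rw [hz1] at hz
  simp [unitDisc] at hz

lemma my_one_sub_ne (z : ℂ) (hz : z ∈ unitDisc) : (1 : ℂ) - z ≠ 0 := by
  intro h
  have hz1 : z = 1 := by linear_combination -h + (1:ℂ)
  rw [hz1] at hz
  simp [unitDisc] at hz

/-- pseudo-hyperbolic distance to a real point, strict comparison. -/

lemma my_proj_unique (z : ℂ) (hz : z ∈ unitDisc) (r : ℝ) (hr : r ∈ Set.Ioo (-1 : ℝ) 1)
    (hmin : ∀ r' : ℝ, r' ∈ Set.Ioo (-1 : ℝ) 1 → kD z ((r : ℂ)) ≤ kD z ((r' : ℂ))) :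
    r = (norm (1 + z) - norm (1 - z)) /
        (norm (1 + z) + norm (1 - z)) := by
  set a := norm (1 + z) with ha_def
  set b := norm (1 - z) with hb_def
  have ha : 0 < a := norm_pos_iff.mpr (my_one_add_ne z hz)
  have hb : 0 < b := norm_pos_iff.mpr (my_one_sub_ne z hz)
  have hab : 0 < a + b := by linarith
  set r₀ : ℝ := (a - b) / (a + b) with hr₀_def
  have hr₀ : r₀ ∈ Set.Ioo (-1 : ℝ) 1 := by
    constructor
    · rw [lt_div_iff₀ hab]; linarith
    · rw [div_lt_one hab]; linarith
  by_contra hne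
  -- we will show kD z r₀ < kD z r, contradicting hmin
  have hE : 0 < 1 - Complex.normSq z := by
    have : Complex.normSq z < 1 := by
      have := hz
      simp only [unitDisc, mem_setOf_eq] at this
      rw [← Complex.sq_norm]
      nlinarith [norm_nonneg z]
    linarith
  have hA : Complex.normSq (1 + z) = a ^ 2 := (Complex.sq_norm _).symm
  have hB : Complex.normSq (1 - z) = b ^ 2 := (Complex.sq_norm _).symm
  -- abbreviations
  set N : ℝ → ℝ := fun s => Complex.normSq (z - (s : ℂ)) with hN_def
  set D : ℝ → ℝ := fun s => Complex.normSq (1 - (starRingEnd ℂ) z * (s : ℂ)) with hD_def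
  have hid1 : ∀ s : ℝ, 4 * N s = a ^ 2 * (1 - s) ^ 2 + b ^ 2 * (1 + s) ^ 2
      - 2 * (1 - s ^ 2) * (1 - Complex.normSq z) := by
    intro s; rw [hN_def, ← hA, ← hB]; exact my_id1 z s
  have hid2 : ∀ s : ℝ, 4 * D s = a ^ 2 * (1 - s) ^ 2 + b ^ 2 * (1 + s) ^ 2
      + 2 * (1 - s ^ 2) * (1 - Complex.normSq z) := by
    intro s; rw [hD_def, ← hA, ← hB]; exact my_id2 z s
  have hDpos : ∀ s : ℝ, s ∈ Set.Ioo (-1 : ℝ) 1 → 0 < D s := by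
    intro s hs
    have h1 : 0 ≤ N s := Complex.normSq_nonneg _
    have h2 : 0 < (1 - s ^ 2) * (1 - Complex.normSq z) := by
      apply mul_pos _ hE; nlinarith [hs.1, hs.2]
    nlinarith [hid1 s, hid2 s]
  have hNDlt : ∀ s : ℝ, s ∈ Set.Ioo (-1 : ℝ) 1 → N s < D s := by
    intro s hs
    have h2 : 0 < (1 - s ^ 2) * (1 - Complex.normSq z) := by
      apply mul_pos _ hE; nlinarith [hs.1, hs.2]
    nlinarith [hid1 s, hid2 s]
  -- key strict inequality
  have hd : a * (1 - r) - b * (1 + r) ≠ 0 := by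
    intro h
    apply hne
    rw [hr₀_def, eq_div_iff (ne_of_gt hab)]
    linarith
  have key : N r₀ * D r < N r * D r₀ := by
    have hkey : 16 * (N r₀ * D r) - 16 * (N r * D r₀) =
        -(16 * a * b * (1 - Complex.normSq z) / (a + b) ^ 2) *
          (a * (1 - r) - b * (1 + r)) ^ 2 := by
      have e1 := hid1 r₀
      have e2 := hid2 r₀
      have e3 := hid1 r
      have e4 := hid2 r
      have h16 : 16 * (N r₀ * D r) - 16 * (N r * D r₀) =
          (4 * N r₀) * (4 * D r) - (4 * N r) * (4 * D r₀) := by ring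
      rw [h16, e1, e2, e3, e4, hr₀_def]
      field_simp
      ring
    have hpos : 0 < 16 * a * b * (1 - Complex.normSq z) / (a + b) ^ 2 *
        (a * (1 - r) - b * (1 + r)) ^ 2 := by
      apply mul_pos (by positivity)
      positivity
    nlinarith [hkey]
  -- convert to abs comparison
  have habs : ∀ s : ℝ, (norm ((z - (s : ℂ)) / (1 - (starRingEnd ℂ) z * (s : ℂ)))) ^ 2
      = N s / D s := by
    intro s
    rw [norm_div, div_pow, Complex.sq_norm, Complex.sq_norm]
  have hu0 : (norm ((z - (r₀ : ℂ)) / (1 - (starRingEnd ℂ) z * (r₀ : ℂ)))) ^ 2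
      < (norm ((z - (r : ℂ)) / (1 - (starRingEnd ℂ) z * (r : ℂ)))) ^ 2 := by
    rw [habs, habs]
    rw [div_lt_div_iff₀ (hDpos r₀ hr₀) (hDpos r hr)]
    exact key
  have hu1 : (norm ((z - (r : ℂ)) / (1 - (starRingEnd ℂ) z * (r : ℂ)))) < 1 := by
    have h2 := habs r
    have h3 : (norm ((z - (r : ℂ)) / (1 - (starRingEnd ℂ) z * (r : ℂ)))) ^ 2 < 1 := by
      rw [h2, div_lt_one (hDpos r hr)]
      exact hNDlt r hr
    nlinarith [norm_nonneg ((z - (r : ℂ)) / (1 - (starRingEnd ℂ) z * (r : ℂ)))]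
  have hlt : norm ((z - (r₀ : ℂ)) / (1 - (starRingEnd ℂ) z * (r₀ : ℂ)))
      < norm ((z - (r : ℂ)) / (1 - (starRingEnd ℂ) z * (r : ℂ))) := by
    nlinarith [norm_nonneg ((z - (r₀ : ℂ)) / (1 - (starRingEnd ℂ) z * (r₀ : ℂ))),
      norm_nonneg ((z - (r : ℂ)) / (1 - (starRingEnd ℂ) z * (r : ℂ)))]
  have : kD z ((r₀ : ℂ)) < kD z ((r : ℂ)) := by
    unfold kD
    exact my_arctanh_lt (norm_nonneg _) hlt hu1
  exact absurd (hmin r₀ hr₀) (not_le.mpr this)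

lemma my_arctanh_ratio_aux {a b : ℝ} (ha : 0 < a) (hb : 0 < b) (hba : b ≤ a) :
    arctanh ((a - b) / (a + b)) = (1 / 2) * Real.log (a / b) := by
  unfold arctanh
  have hab : (0:ℝ) < a + b := by linarith
  have harg : (1 + (a - b) / (a + b)) / (1 - (a - b) / (a + b)) = a / b := by
    have h1 : 1 + (a - b) / (a + b) = 2 * a / (a + b) := by field_simp; ring
    have h2 : 1 - (a - b) / (a + b) = 2 * b / (a + b) := by field_simp; ring
    rw [h1, h2]
    field_simp
  rw [harg]

lemma my_arctanh_ratio {a b : ℝ} (ha : 0 < a) (hb : 0 < b) :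
    arctanh |(a - b) / (a + b)| = (1 / 2) * |Real.log (a / b)| := by
  have hab : (0:ℝ) < a + b := by linarith
  rcases le_total b a with h | h
  · have h1 : (0:ℝ) ≤ (a - b) / (a + b) := by
      apply div_nonneg (by linarith) (le_of_lt hab)
    rw [_root_.abs_of_nonneg h1, my_arctanh_ratio_aux ha hb h,
      _root_.abs_of_nonneg (Real.log_nonneg ((one_le_div hb).mpr h))]
  · have h1 : (a - b) / (a + b) ≤ 0 := by
      apply div_nonpos_of_nonpos_of_nonneg (by linarith) (le_of_lt hab)
    have h2 : |(a - b) / (a + b)| = (b - a) / (b + a) := by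
      rw [_root_.abs_of_nonpos h1]; ring_nf
    rw [h2, my_arctanh_ratio_aux hb ha h]
    have h3 : Real.log (a / b) ≤ 0 :=
      Real.log_nonpos (by positivity) ((div_le_one hb).mpr h)
    rw [_root_.abs_of_nonpos h3]
    rw [← Real.log_inv]
    congr 2
    field_simp

lemma my_disc_ne_one (z : ℂ) (hz : z ∈ unitDisc) : z ≠ 1 := by
  intro h; rw [h] at hz; simp [unitDisc] at hz

/-- **Lemma 4.1:** the orthogonal speed is comparable with `−(1/2) log ω(1, Θ_t, ℍ)`,
where `Θ_t = {iy : |y| ≥ ρ_t}`. -/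
theorem orthSpeed_add_half_log_omegaH_bounded
    (φ : ℝ → ℂ → ℂ) (p : ℂ → ℂ) (ρ θf : ℝ → ℝ)
    (hφ : IsNonElliptic φ) (hτ : IsDenjoyWolff φ 1) (hp : IsOrthProjection 1 p)
    (hpolar : ∀ t : ℝ, 0 ≤ t → 0 < ρ t ∧
      θf t ∈ Set.Ioo (-(Real.pi / 2)) (Real.pi / 2) ∧
      cayley (φ t 0) = (ρ t : ℂ) * Complex.exp (Complex.I * (θf t : ℂ))) :
    ∃ K : ℝ, 0 < K ∧ ∀ t : ℝ, 1 ≤ t →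
      |orthSpeed φ p t + (1 / 2) * Real.log (omegaH 1 (Theta (ρ t)))| ≤ K := by
  have hz0 : (0 : ℂ) ∈ unitDisc := by simp [unitDisc]
  have hπ : (0:ℝ) < Real.pi := Real.pi_pos
  -- |cayley (φ t 0)| = ρ t
  have hρabs : ∀ t : ℝ, 0 ≤ t → norm (cayley (φ t 0)) = ρ t := by
    intro t ht
    obtain ⟨hρpos, _, hc⟩ := hpolar t ht
    rw [hc, norm_mul, Complex.norm_real, Real.norm_eq_abs, Complex.norm_exp, _root_.abs_of_pos hρpos]
    simp [Complex.mul_re]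
  -- orthogonal speed formula
  have horth : ∀ t : ℝ, 0 ≤ t → orthSpeed φ p t = (1 / 2) * |Real.log (ρ t)| := by
    intro t ht
    have hz : φ t 0 ∈ unitDisc := hφ.mapsTo t ht hz0
    have ha : 0 < norm (1 + φ t 0) :=
      norm_pos_iff.mpr (my_one_add_ne _ hz)
    have hb : 0 < norm (1 - φ t 0) :=
      norm_pos_iff.mpr (my_one_sub_ne _ hz)
    have hρeq : ρ t = norm (1 + φ t 0) / norm (1 - φ t 0) := by
      rw [← hρabs t ht]; unfold cayley; rw [norm_div]
    obtain ⟨⟨r, hrI, hpz⟩, hmin⟩ := hp (φ t 0) hz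
    have hmin' : ∀ r' : ℝ, r' ∈ Set.Ioo (-1 : ℝ) 1 →
        kD (φ t 0) ((r : ℂ)) ≤ kD (φ t 0) ((r' : ℂ)) := by
      intro r' hr'
      have h := hmin r' hr'
      rwa [hpz, mul_one, mul_one] at h
    have hre := my_proj_unique (φ t 0) hz r hrI hmin'
    show kD 0 (p (φ t 0)) = _
    rw [hpz, mul_one, my_kd_zero, hre, my_arctanh_ratio ha hb, hρeq]
  -- eventual lower bound 1 on ρ
  have htend : Tendsto (fun t => φ t 0) atTop (𝓝 1) := hτ.2 0 hz0
  have hev : ∀ᶠ t in (atTop : Filter ℝ),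
      norm (φ t 0 - 1) < 1 / 2 ∧ 0 ≤ t := by
    have h1 := htend.eventually (Metric.ball_mem_nhds (1 : ℂ) (by norm_num : (0:ℝ) < 1/2))
    filter_upwards [h1, eventually_ge_atTop (0 : ℝ)] with t h1t h2t
    refine ⟨?_, h2t⟩
    simpa [Metric.mem_ball, Complex.dist_eq] using h1t
  obtain ⟨T, hT⟩ := eventually_atTop.mp hev
  have hT1 : ∀ t : ℝ, T ≤ t → (1 : ℝ) ≤ ρ t := by
    intro t ht
    obtain ⟨hdist, ht0⟩ := hT t ht
    have hz : φ t 0 ∈ unitDisc := hφ.mapsTo t ht0 hz0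
    have hbne : (1 : ℂ) - φ t 0 ≠ 0 := my_one_sub_ne _ hz
    have hbpos : 0 < norm (1 - φ t 0) := norm_pos_iff.mpr hbne
    have hb' : norm (1 - φ t 0) < 1 / 2 := by
      have : (1 : ℂ) - φ t 0 = -(φ t 0 - 1) := by ring
      rw [this, norm_neg]
      exact hdist
    have ha' : (3 : ℝ) / 2 ≤ norm (1 + φ t 0) := by
      have h2 : (1 : ℂ) + φ t 0 = 2 - (1 - φ t 0) := by ring
      have h3 : norm (2 : ℂ) - norm (1 - φ t 0) ≤
          norm (2 - (1 - φ t 0)) := by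
        exact norm_sub_norm_le (2 : ℂ) (1 - φ t 0)
      have h4 : norm (2 : ℂ) = 2 := by
        simp
      rw [h2]
      rw [h4] at h3
      linarith
    have hρeq : ρ t = norm (1 + φ t 0) / norm (1 - φ t 0) := by
      rw [← hρabs t ht0]; unfold cayley; rw [norm_div]
    rw [hρeq, le_div_iff₀ hbpos]
    linarith
  -- minimum on compact interval
  set T' := max T 1 with hT'def
  have hcont : ContinuousOn (fun t => norm (cayley (φ t 0))) (Icc 1 T') := by
    have h1 : ContinuousOn (fun t : ℝ => φ t 0) (Icc 1 T') := by
      have hmap : MapsTo (fun t : ℝ => ((t, (0 : ℂ)) : ℝ × ℂ)) (Icc 1 T')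
          (Set.Ici 0 ×ˢ unitDisc) := by
        intro t ht
        exact ⟨le_trans zero_le_one ht.1, hz0⟩
      exact hφ.cont.comp ((continuous_id.prodMk continuous_const).continuousOn) hmap
    have h2 : ContinuousOn cayley unitDisc := by
      unfold cayley
      apply ContinuousOn.div
      · fun_prop
      · fun_prop
      · intro w hw
        rw [sub_ne_zero]
        exact fun h => my_disc_ne_one w hw h.symm
    exact continuous_norm.comp_continuousOn
      (h2.comp h1 (fun t ht => hφ.mapsTo t (le_trans zero_le_one ht.1) hz0))
  have hne : (Icc (1 : ℝ) T').Nonempty := ⟨1, le_refl 1, le_max_right T 1⟩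
  obtain ⟨t₀, ht₀mem, ht₀min⟩ := isCompact_Icc.exists_isMinOn hne hcont
  have ht₀0 : (0 : ℝ) ≤ t₀ := le_trans zero_le_one ht₀mem.1
  set m := min (norm (cayley (φ t₀ 0))) 1 with hmdef
  have hmpos : 0 < m := by
    apply lt_min _ zero_lt_one
    rw [hρabs t₀ ht₀0]
    exact (hpolar t₀ ht₀0).1
  have hlow : ∀ t : ℝ, 1 ≤ t → m ≤ ρ t := by
    intro t ht
    rcases le_total t T' with hcase | hcase
    · rw [← hρabs t (le_trans zero_le_one ht)]
      exact le_trans (min_le_left _ _) (isMinOn_iff.mp ht₀min t ⟨ht, hcase⟩)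
    · exact le_trans (min_le_right _ _) (hT1 t (le_trans (le_max_left T 1) hcase))
  -- conclusion
  refine ⟨(1 / 2) * |Real.log m| + Real.log Real.pi + Real.log 2 + 1, ?_, ?_⟩
  · have h1 := abs_nonneg (Real.log m)
    have h2 : (0:ℝ) ≤ Real.log Real.pi := Real.log_nonneg (by linarith [Real.pi_gt_three])
    have h3 : (0:ℝ) ≤ Real.log 2 := Real.log_nonneg one_le_two
    linarith
  intro t ht
  have ht0 : (0 : ℝ) ≤ t := le_trans zero_le_one ht
  have hρpos : 0 < ρ t := (hpolar t ht0).1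
  rw [horth t ht0, my_omega_eq hρpos]
  have hmx : m ≤ ρ t := hlow t ht
  have hatp : 0 < Real.arctan (ρ t)⁻¹ := by
    rw [← Real.arctan_zero]
    exact Real.arctan_strictMono (by positivity)
  have hωpos : 0 < 2 / Real.pi * Real.arctan (ρ t)⁻¹ := by positivity
  have hlogπ : (0:ℝ) ≤ Real.log Real.pi := Real.log_nonneg (by linarith [Real.pi_gt_three])
  have hlog2 : (0:ℝ) ≤ Real.log 2 := Real.log_nonneg one_le_two
  have habsm : (0:ℝ) ≤ |Real.log m| := abs_nonneg _
  rcases le_total 1 (ρ t) with hx1 | hx1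
  · -- ρ t ≥ 1
    have hinv0 : 0 < (ρ t)⁻¹ := by positivity
    have hcancel : ρ t * (ρ t)⁻¹ = 1 := mul_inv_cancel₀ (ne_of_gt hρpos)
    have hinv1 : (ρ t)⁻¹ ≤ 1 := by nlinarith
    have hup : Real.arctan (ρ t)⁻¹ ≤ (ρ t)⁻¹ := my_arctan_le_self (le_of_lt hinv0)
    have hlo : (ρ t)⁻¹ / 2 ≤ Real.arctan (ρ t)⁻¹ :=
      my_half_le_arctan (le_of_lt hinv0) hinv1
    have hω_up : 2 / Real.pi * Real.arctan (ρ t)⁻¹ ≤ 2 / (Real.pi * ρ t) := by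
      have h1 : 2 / Real.pi * Real.arctan (ρ t)⁻¹ ≤ 2 / Real.pi * (ρ t)⁻¹ :=
        mul_le_mul_of_nonneg_left hup (by positivity)
      have h2 : 2 / Real.pi * (ρ t)⁻¹ = 2 / (Real.pi * ρ t) := by field_simp
      linarith
    have hω_lo : 1 / (Real.pi * ρ t) ≤ 2 / Real.pi * Real.arctan (ρ t)⁻¹ := by
      have h1 : 2 / Real.pi * ((ρ t)⁻¹ / 2) ≤ 2 / Real.pi * Real.arctan (ρ t)⁻¹ :=
        mul_le_mul_of_nonneg_left hlo (by positivity)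
      have h2 : 2 / Real.pi * ((ρ t)⁻¹ / 2) = 1 / (Real.pi * ρ t) := by field_simp
      linarith
    have hlog_up : Real.log (2 / Real.pi * Real.arctan (ρ t)⁻¹) ≤
        Real.log 2 - Real.log Real.pi - Real.log (ρ t) := by
      have h3 := Real.log_le_log hωpos hω_up
      rw [Real.log_div two_ne_zero (by positivity),
        Real.log_mul (ne_of_gt hπ) (ne_of_gt hρpos)] at h3
      linarith
    have hlog_lo : -Real.log Real.pi - Real.log (ρ t) ≤
        Real.log (2 / Real.pi * Real.arctan (ρ t)⁻¹) := by
      have h3 := Real.log_le_log (by positivity : (0:ℝ) < 1 / (Real.pi * ρ t)) hω_lo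
      rw [one_div, Real.log_inv, Real.log_mul (ne_of_gt hπ) (ne_of_gt hρpos)] at h3
      linarith
    rw [_root_.abs_of_nonneg (Real.log_nonneg hx1), abs_le]
    constructor
    · linarith
    · linarith
  · -- ρ t ≤ 1
    have hm1 : m ≤ 1 := le_trans hmx hx1
    have hlogm : Real.log m ≤ 0 := Real.log_nonpos (le_of_lt hmpos) hm1
    have hlogx : Real.log (ρ t) ≤ 0 := Real.log_nonpos (le_of_lt hρpos) hx1
    have h1 : Real.log m ≤ Real.log (ρ t) := Real.log_le_log hmpos hmx
    have hcancel : ρ t * (ρ t)⁻¹ = 1 := mul_inv_cancel₀ (ne_of_gt hρpos)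
    have hinv0 : 0 < (ρ t)⁻¹ := by positivity
    have hinvge : (1 : ℝ) ≤ (ρ t)⁻¹ := by nlinarith
    have harc1 : Real.pi / 4 ≤ Real.arctan (ρ t)⁻¹ := by
      rw [← Real.arctan_one]
      exact Real.arctan_strictMono.monotone hinvge
    have harc2 : Real.arctan (ρ t)⁻¹ ≤ Real.pi / 2 :=
      le_of_lt (Real.arctan_lt_pi_div_two _)
    have hω_lo : (1 : ℝ) / 2 ≤ 2 / Real.pi * Real.arctan (ρ t)⁻¹ := by
      have h2 := mul_le_mul_of_nonneg_left harc1 (by positivity : (0:ℝ) ≤ 2 / Real.pi)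
      have h3 : 2 / Real.pi * (Real.pi / 4) = 1 / 2 := by field_simp; ring
      linarith
    have hω_up : 2 / Real.pi * Real.arctan (ρ t)⁻¹ ≤ 1 := by
      have h2 := mul_le_mul_of_nonneg_left harc2 (by positivity : (0:ℝ) ≤ 2 / Real.pi)
      have h3 : 2 / Real.pi * (Real.pi / 2) = 1 := by field_simp
      linarith
    have hlog_lo : -Real.log 2 ≤ Real.log (2 / Real.pi * Real.arctan (ρ t)⁻¹) := by
      have h2 := Real.log_le_log (by norm_num : (0:ℝ) < 1/2) hω_lo
      rw [show (1:ℝ)/2 = 2⁻¹ by norm_num, Real.log_inv] at h2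
      linarith
    have hlog_up : Real.log (2 / Real.pi * Real.arctan (ρ t)⁻¹) ≤ 0 :=
      Real.log_nonpos (le_of_lt hωpos) hω_up
    rw [_root_.abs_of_nonpos hlogx, abs_le]
    have habsm' : Real.log m ≤ 0 → |Real.log m| = -Real.log m := _root_.abs_of_nonpos
    rw [habsm' hlogm]
    constructor
    · linarith
    · linarith

end
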